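/- arXiv:1812.10499 — 2 statements merged into one kernel-verified Lean document; each statement's English description precedes it below -/
import Mathlib

section
/- (Cut lower bound, Lemma 7 of the paper.) Let C : V → ℝ≥0∞ satisfy C v ≤ cost v for every vertex v, and let F ⊆ V be a set of vertices with v0 ∈ F. Then for every vertex x with x ∉ F, the infimum of C u + w u v, taken over all edges E u v with u ∈ F and v ∉ F, is a lower bound on cost x; that is, ⨅ {C u + w u v : E u v ∧ u ∈ F ∧ v ∉ F} ≤ cost x. -/
open scoped ENNReal

variable {V : Type*}

/-- `IsPath E v0 x p` means `p` is a finite sequence of vertices starting at `v0`,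
ending at `x`, with consecutive vertices joined by edges of `E`. -/
def IsPath (E : V → V → Prop) (v0 x : V) (p : List V) : Prop :=
  p.Chain' E ∧ p.head? = some v0 ∧ p.getLast? = some x

/-- The cost of a path: the sum of the weights of its consecutive edges. -/
noncomputable def pathCost (w : V → V → ℝ≥0∞) (p : List V) : ℝ≥0∞ :=
  ((p.zip p.tail).map fun q => w q.1 q.2).sum

/-- `cost E w v0 x` : the infimum of the costs of all paths from `v0` to `x`
(`∞` if `x` is unreachable from `v0`). -/
noncomputable def cost (E : V → V → Prop) (w : V → V → ℝ≥0∞) (v0 x : V) : ℝ≥0∞ :=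
  ⨅ p : {p : List V // IsPath E v0 x p}, pathCost w p.1

lemma pathCost_cons2 (w : V → V → ℝ≥0∞) (a b : V) (l : List V) :
    pathCost w (a :: b :: l) = w a b + pathCost w (b :: l) := by
  simp [pathCost]

lemma pathCost_snoc (w : V → V → ℝ≥0∞) :
    ∀ (l : List V) (y z : V), l.getLast? = some y →
      pathCost w (l ++ [z]) = pathCost w l + w y z
  | [], y, z, h => by simp at h
  | [a], y, z, h => by
      simp at h; subst h; simp [pathCost]
  | a :: b :: t, y, z, h => by
      have h' : (b :: t).getLast? = some y := by simpa using h
      have := pathCost_snoc w (b :: t) y z h'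
      simp only [List.cons_append] at this ⊢
      rw [pathCost_cons2, this, pathCost_cons2, add_assoc]

lemma isPath_snoc (E : V → V → Prop) (v0 y z : V) (pre : List V)
    (h : IsPath E v0 y pre) (hE : E y z) : IsPath E v0 z (pre ++ [z]) := by
  obtain ⟨hc, hh, hl⟩ := h
  refine ⟨?_, ?_, ?_⟩
  · refine (List.isChain_append (R := E)).mpr ?_
    refine ⟨hc, List.isChain_singleton z, ?_⟩
    intro a ha b hb
    simp at hb; subst hb
    rw [hl] at ha; simp at ha; subst ha; exact hE
  · cases pre with
    | nil => simp at hl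
    | cons a t => simpa using hh
  · simp

lemma aux_lemma (E : V → V → Prop) (w : V → V → ℝ≥0∞) (v0 : V) (C : V → ℝ≥0∞)
    (hC : ∀ v, C v ≤ cost E w v0 v) (F : Set V) (x : V) (hx : x ∉ F) :
    ∀ (rest : List V) (y : V), y ∈ F → IsPath E y x (y :: rest) →
      ∀ pre : List V, IsPath E v0 y pre →
      (⨅ e : {e : V × V // E e.1 e.2 ∧ e.1 ∈ F ∧ e.2 ∉ F}, (C e.1.1 + w e.1.1 e.1.2))
        ≤ pathCost w pre + pathCost w (y :: rest) := by
  intro rest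
  induction rest with
  | nil =>
      intro y hy hp pre hpre
      obtain ⟨_, _, hl⟩ := hp
      simp at hl
      exact absurd (hl ▸ hy) hx
  | cons z rest' ih =>
      intro y hy hp pre hpre
      obtain ⟨hc, hh, hl⟩ := hp
      have hE : E y z := (List.isChain_cons_cons.mp hc).1
      have hc' : (z :: rest').Chain' E := (List.isChain_cons_cons.mp hc).2
      have hl' : (z :: rest').getLast? = some x := by simpa using hl
      have hpz : IsPath E z x (z :: rest') := ⟨hc', rfl, hl'⟩
      rw [pathCost_cons2]
      by_cases hz : z ∈ F
      · have hlpre : pre.getLast? = some y := hpre.2.2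
        have := ih z hz hpz (pre ++ [z]) (isPath_snoc E v0 y z pre hpre hE)
        rw [pathCost_snoc w pre y z hlpre] at this
        calc _ ≤ _ := this
        _ = pathCost w pre + (w y z + pathCost w (z :: rest')) := by ring
      · have h1 : (⨅ e : {e : V × V // E e.1 e.2 ∧ e.1 ∈ F ∧ e.2 ∉ F},
            (C e.1.1 + w e.1.1 e.1.2)) ≤ C y + w y z :=
          iInf_le (fun e : {e : V × V // E e.1 e.2 ∧ e.1 ∈ F ∧ e.2 ∉ F} => C e.1.1 + w e.1.1 e.1.2) ⟨(y, z), hE, hy, hz⟩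
        have h2 : C y ≤ pathCost w pre := by
          refine le_trans (hC y) ?_
          exact iInf_le (fun p : {p : List V // IsPath E v0 y p} => pathCost w p.1) ⟨pre, hpre⟩
        calc _ ≤ C y + w y z := h1
        _ ≤ pathCost w pre + w y z := by gcongr
        _ ≤ pathCost w pre + (w y z + pathCost w (z :: rest')) := by
            rw [← add_assoc]; exact le_self_add

/-- Cut lower bound (Lemma 7): if `C` is a pointwise lower bound on `cost`,
`v0 ∈ F`, and `x ∉ F`, then the infimum of `C u + w u v` over all crossing edges
(from `F` to its complement) is a lower bound on `cost x`. -/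
theorem cut_lowerBound [Fintype V] (E : V → V → Prop) (w : V → V → ℝ≥0∞)
    (hpos : ∀ u v, E u v → 0 < w u v) (hfin : ∀ u v, E u v → w u v < ⊤)
    (v0 : V) (C : V → ℝ≥0∞) (hC : ∀ v, C v ≤ cost E w v0 v)
    (F : Set V) (hv0 : v0 ∈ F) (x : V) (hx : x ∉ F) :
    (⨅ e : {e : V × V // E e.1 e.2 ∧ e.1 ∈ F ∧ e.2 ∉ F}, (C e.1.1 + w e.1.1 e.1.2))
      ≤ cost E w v0 x := by
  rw [cost]
  refine le_iInf ?_
  rintro ⟨p, hp⟩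
  obtain ⟨hc, hh, hl⟩ := hp
  cases p with
  | nil => simp at hh
  | cons a rest =>
      have ha : a = v0 := by simpa using hh
      subst ha
      have h0 : IsPath E a a [a] := ⟨List.isChain_singleton _, rfl, rfl⟩
      have := aux_lemma E w a C hC F x hx rest a hv0 ⟨hc, hh, hl⟩ [a] h0
      simpa [pathCost] using this
end

section
/- (In-version criterion of Crauser et al., proved as part (b) of the lemma on SP₃.) Let k ∉ F be a vertex such that D k ≤ (⨅ {D y : y ∉ F}) + (⨅ {w v k : E v k}), where the second infimum is over all in-edges of k. Then D k = cost k. -/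
open scoped ENNReal

variable {V : Type*}

lemma pathCost_cons_cons (w : V → V → ℝ≥0∞) (x y : V) (l : List V) :
    pathCost w (x :: y :: l) = w x y + pathCost w (y :: l) := rfl

lemma pathCost_append (w : V → V → ℝ≥0∞) (a : List V) (y : V) (b : List V) :
    pathCost w (a ++ y :: b) = pathCost w (a ++ [y]) + pathCost w (y :: b) := by
  induction a with
  | nil => simp [pathCost]
  | cons x a ih =>
    cases a with
    | nil => simp [pathCost_cons_cons, pathCost]
    | cons x' a' =>
      simp only [List.cons_append, pathCost_cons_cons] at *
      rw [ih, add_assoc]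

lemma exists_last_edge {E : V → V → Prop} (w : V → V → ℝ≥0∞) :
    ∀ (l : List V) (k : V), l.Chain' E → l.getLast? = some k → 2 ≤ l.length →
      ∃ u, E u k ∧ w u k ≤ pathCost w l := by
  intro l
  induction l with
  | nil => intro k _ _ h2; simp at h2
  | cons x l ih =>
    intro k hc hl h2
    cases l with
    | nil => simp at h2
    | cons y t =>
      cases t with
      | nil =>
        simp at hl
        subst hl
        exact ⟨x, (List.isChain_cons_cons.mp hc).1, by simp [pathCost_cons_cons, pathCost]⟩
      | cons z t' =>
        obtain ⟨u, hu, hle⟩ := ih k (List.isChain_cons_cons.mp hc).2 (by simpa using hl) (by simp)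
        exact ⟨u, hu, hle.trans (by rw [pathCost_cons_cons]; exact le_add_self)⟩

lemma first_fail {P : V → Prop} :
    ∀ (l : List V), (∃ x ∈ l, ¬ P x) →
      ∃ a y b, l = a ++ y :: b ∧ ¬ P y ∧ ∀ z ∈ a, P z := by
  intro l
  induction l with
  | nil => rintro ⟨x, hx, -⟩; simp at hx
  | cons x t ih =>
    intro h
    by_cases hx : P x
    · obtain ⟨z, hz, hpz⟩ := h
      rcases List.mem_cons.mp hz with rfl | hz
      · exact absurd hx hpz
      · obtain ⟨a, y, b, rfl, hy, ha⟩ := ih ⟨z, hz, hpz⟩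
        exact ⟨x :: a, y, b, rfl, hy, by
          intro u hu; rcases List.mem_cons.mp hu with rfl | hu
          · exact hx
          · exact ha u hu⟩
    · exact ⟨[], x, t, rfl, hx, by simp⟩

/-- An `F`-path from `v0` to `x` : a path all of whose vertices other than the
final vertex `x` lie in `F`. `Dfun E w v0 F x` is the infimum of the costs of
`F`-paths from `v0` to `x` (`∞` if no `F`-path to `x` exists). -/
noncomputable def Dfun (E : V → V → Prop) (w : V → V → ℝ≥0∞) (v0 : V) (F : Set V)
    (x : V) : ℝ≥0∞ :=
  ⨅ p : {p : List V // IsPath E v0 x p ∧ ∀ v ∈ p.dropLast, v ∈ F}, pathCost w p.1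

/-- In-version criterion of Crauser et al.: if `k ∉ F` and
`D k ≤ (⨅ {D y : y ∉ F}) + (⨅ {w v k : E v k})`, then `D k = cost k`. -/
theorem in_version_criterion [Fintype V] (E : V → V → Prop) (w : V → V → ℝ≥0∞)
    (hpos : ∀ u v, E u v → 0 < w u v) (hfin : ∀ u v, E u v → w u v < ⊤)
    (v0 : V) (F : Set V) (hv0 : v0 ∈ F) (k : V) (hk : k ∉ F)
    (hD : Dfun E w v0 F k ≤
      (⨅ y : {y : V // y ∉ F}, Dfun E w v0 F y.1) +
      (⨅ v : {v : V // E v k}, w v.1 k)) :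
    Dfun E w v0 F k = cost E w v0 k := by
  refine le_antisymm ?_ ?_
  · -- Dfun ≤ cost
    refine le_iInf fun q => ?_
    obtain ⟨p, hp⟩ := q
    by_cases hall : ∀ v ∈ p.dropLast, v ∈ F
    · exact iInf_le (fun q : {p : List V // IsPath E v0 k p ∧ ∀ v ∈ p.dropLast, v ∈ F} => pathCost w q.1) ⟨p, hp, hall⟩
    · push_neg at hall
      obtain ⟨hchain, hhead, hlast⟩ := hp
      obtain ⟨a, y, b, hdec, hy, ha⟩ :=
        first_fail (P := (· ∈ F)) p.dropLast (by simpa using hall)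
      have hne : p ≠ [] := by rintro rfl; simp at hhead
      have hplast : p = p.dropLast ++ [k] := by
        have := List.dropLast_append_getLast hne
        rw [List.getLast?_eq_getLast hne] at hlast
        rw [Option.some.injEq] at hlast
        rw [hlast] at this
        exact this.symm
      have hp2 : p = (a ++ [y]) ++ (b ++ [k]) := by
        rw [hplast, hdec]; simp
      -- first piece: F-path to y
      have hq : IsPath E v0 y (a ++ [y]) := by
        refine ⟨hchain.prefix ⟨b ++ [k], hp2.symm⟩, ?_, List.getLast?_concat⟩
        cases a with
        | nil =>
          simp only [List.nil_append] at hp2 ⊢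
          rw [hp2] at hhead
          simp at hhead ⊢
          exact absurd (hhead ▸ hv0) hy
        | cons x a' =>
          rw [hp2] at hhead
          simpa using hhead
      have hDy : Dfun E w v0 F y ≤ pathCost w (a ++ [y]) :=
        iInf_le (fun q : {p : List V // IsPath E v0 y p ∧ ∀ v ∈ p.dropLast, v ∈ F} => pathCost w q.1) ⟨a ++ [y], hq, by rw [List.dropLast_concat]; exact ha⟩
      -- second piece: last edge
      have hchain2 : (y :: (b ++ [k])).Chain' E := by
        have : p = a ++ (y :: (b ++ [k])) := by simpa using hp2
        exact (this ▸ hchain).right_of_append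
      obtain ⟨u, hu, hwu⟩ := exists_last_edge (E := E) w (y :: (b ++ [k])) k hchain2
        (by rw [show y :: (b ++ [k]) = (y :: b) ++ [k] by simp]; exact List.getLast?_concat)
        (by simp)
      calc Dfun E w v0 F k ≤ _ + _ := hD
        _ ≤ pathCost w (a ++ [y]) + pathCost w (y :: (b ++ [k])) :=
            add_le_add ((iInf_le _ ⟨y, hy⟩).trans hDy) ((iInf_le _ ⟨u, hu⟩).trans hwu)
        _ = pathCost w p := by rw [hplast, hdec, List.append_assoc] at *; exact (pathCost_append w a y (b ++ [k])).symm ▸ by rw [← pathCost_append]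
  · -- cost ≤ Dfun
    refine le_iInf fun q => ?_
    obtain ⟨p, hp, -⟩ := q
    exact iInf_le (fun q : {p : List V // IsPath E v0 k p} => pathCost w q.1) ⟨p, hp⟩
end
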